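/- arXiv:2502.02888 — 8 statements merged into one kernel-verified Lean document; each statement's English description precedes it below -/
import Mathlib

section
/- If n > 1, the matrix RS-algebra A = F^n ⊕ M_n(F) is a simple algebra: its only two-sided ideals are 0 and A. -/
/-- The matrix RS-algebra `F^n ⊕ M_n(F)`. -/
def rsMul (F : Type*) [Field F] (n : ℕ) :
    ((Fin n → F) × Matrix (Fin n) (Fin n) F) →
    ((Fin n → F) × Matrix (Fin n) (Fin n) F) →
    ((Fin n → F) × Matrix (Fin n) (Fin n) F) :=
  fun a b =>
    (Matrix.vecMul a.1 b.2 + Matrix.vecMul b.1 a.2,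
     a.2 * b.2 + (a.2 * Matrix.diagonal b.1 - Matrix.diagonal b.1 * a.2))

section Aux

variable {F : Type*} [Field F] {n : ℕ}

lemma aux_vecMul_std (w : Fin n → F) (i j : Fin n) (c : F) :
    Matrix.vecMul w (Matrix.single i j c)
      = (w i * c) • (Pi.single j 1 : Fin n → F) := by
  ext k
  rcases eq_or_ne k j with rfl | hk
  · simp [Matrix.vecMul, dotProduct, Matrix.single, ite_and,
      Pi.single_apply, mul_ite]
  · simp [Matrix.vecMul, dotProduct, Matrix.single, ite_and,
      Pi.single_apply, mul_ite, hk, Ne.symm hk]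

lemma aux_std_row (i j : Fin n) (c : F) :
    (Matrix.single i j c) i = Pi.single j c := by
  ext m
  rcases eq_or_ne m j with rfl | hm
  · simp [Matrix.single]
  · simp [Matrix.single, hm, Ne.symm hm, Pi.single_apply]

lemma aux_std_mul_diag (i j : Fin n) (c : F) (d : Fin n → F) :
    Matrix.single i j c * Matrix.diagonal d = Matrix.single i j (c * d j) := by
  ext p q
  rcases eq_or_ne q j with rfl | hq
  · simp [Matrix.mul_apply, Matrix.single, Matrix.diagonal, ite_and]
  · simp [Matrix.mul_apply, Matrix.single, Matrix.diagonal, ite_and,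
      hq, Ne.symm hq]

lemma aux_diag_mul_std (i j : Fin n) (c : F) (d : Fin n → F) :
    Matrix.diagonal d * Matrix.single i j c = Matrix.single i j (d i * c) := by
  ext p q
  rcases eq_or_ne p i with rfl | hp
  · simp [Matrix.mul_apply, Matrix.single, Matrix.diagonal, ite_and]
  · simp [Matrix.mul_apply, Matrix.single, Matrix.diagonal, ite_and,
      hp, Ne.symm hp]

end Aux

/-- For `n > 1`, the matrix RS-algebra is simple: every two-sided ideal
(an `F`-subspace closed under multiplication by arbitrary elements on both
sides) is `0` or the whole algebra. -/
theorem matrixRS_simple (F : Type*) [Field F] (n : ℕ) (hn : 1 < n)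
    (I : Submodule F ((Fin n → F) × Matrix (Fin n) (Fin n) F))
    (hleft : ∀ a, ∀ b ∈ I, rsMul F n a b ∈ I)
    (hright : ∀ a, ∀ b ∈ I, rsMul F n b a ∈ I) :
    I = ⊥ ∨ I = ⊤ := by
  classical
  rcases eq_or_ne I ⊥ with h | h
  · exact Or.inl h
  right
  obtain ⟨⟨v, A⟩, hmem, hne⟩ := (Submodule.ne_bot_iff I).mp h
  -- Step 1: a nonzero pure vector lies in I
  obtain ⟨w, hw0, hwI⟩ : ∃ w : Fin n → F, w ≠ 0 ∧
      ((w, 0) : (Fin n → F) × Matrix (Fin n) (Fin n) F) ∈ I := by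
    by_cases hA : A = 0
    · refine ⟨v, ?_, by simpa [hA] using hmem⟩
      intro hv; exact hne (by simp [hv, hA, Prod.ext_iff])
    · obtain ⟨i, j, hij⟩ : ∃ i j, A i j ≠ 0 := by
        by_contra hc; push_neg at hc
        exact hA (by ext i j; simp [hc])
      refine ⟨A i, fun hz => hij (by simpa using congrFun hz j), ?_⟩
      have := hleft (Pi.single i 1, 0) _ hmem
      simpa [rsMul, Matrix.single_one_vecMul, Matrix.row] using this
  -- pick an index where w is nonzero
  obtain ⟨i, hwi'⟩ := Function.ne_iff.mp hw0
  have hwi : w i ≠ 0 := by simpa using hwi'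
  -- Step 2: all basis vectors lie in I
  have hvec : ∀ j : Fin n, ((Pi.single j 1, 0) :
      (Fin n → F) × Matrix (Fin n) (Fin n) F) ∈ I := by
    intro j
    have := hright (0, Matrix.single i j (w i)⁻¹) _ hwI
    simpa [rsMul, aux_vecMul_std, mul_inv_cancel₀ hwi] using this
  -- Step 3: all off-diagonal matrix units lie in I
  have hoff : ∀ j k : Fin n, j ≠ k → ((0, Matrix.single j k (1 : F)) :
      (Fin n → F) × Matrix (Fin n) (Fin n) F) ∈ I := by
    intro j k hjk
    have h1 := hleft (0, Matrix.single j k (1 : F)) _ (hvec j)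
    have h2 : rsMul F n (0, Matrix.single j k (1 : F)) (Pi.single j 1, 0)
        = (Pi.single k 1, - Matrix.single j k (1 : F)) := by
      refine Prod.ext ?_ ?_
      · show Matrix.vecMul 0 (0 : Matrix (Fin n) (Fin n) F)
          + Matrix.vecMul (Pi.single j 1) (Matrix.single j k (1 : F)) = _
        simp [Matrix.single_one_vecMul, Matrix.row, aux_std_row]
      · show Matrix.single j k (1 : F) * 0
          + (Matrix.single j k (1 : F) * Matrix.diagonal (Pi.single j 1)
            - Matrix.diagonal (Pi.single j 1) * Matrix.single j k (1 : F)) = _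
        simp [aux_std_mul_diag, aux_diag_mul_std, Pi.single_apply, hjk, Ne.symm hjk]
    rw [h2] at h1
    have h3 := I.sub_mem (hvec k) h1
    have h4 : ((Pi.single k 1, 0) : (Fin n → F) × Matrix (Fin n) (Fin n) F)
        - (Pi.single k 1, - Matrix.single j k (1 : F))
        = (0, Matrix.single j k (1 : F)) := by
      simp [Prod.ext_iff]
    rwa [h4] at h3
  -- Step 4: all matrix units lie in I
  have hstd : ∀ p q : Fin n, ∀ c : F, ((0, Matrix.single p q c) :
      (Fin n → F) × Matrix (Fin n) (Fin n) F) ∈ I := by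
    intro p q c
    have key : ((0, Matrix.single p q (1 : F)) :
        (Fin n → F) × Matrix (Fin n) (Fin n) F) ∈ I := by
      by_cases hpq : p = q
      · subst hpq
        have : Nontrivial (Fin n) := Fin.nontrivial_iff_two_le.mpr hn
        obtain ⟨k, hk⟩ := exists_ne p
        have h1 := hleft (0, Matrix.single p k (1 : F)) _ (hoff k p hk)
        have h2 : rsMul F n (0, Matrix.single p k (1 : F))
            (0, Matrix.single k p (1 : F))
            = (0, Matrix.single p p (1 : F)) := by
          refine Prod.ext (by simp [rsMul]) ?_
          show Matrix.single p k (1 : F) * Matrix.single k p (1 : F)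
            + (Matrix.single p k (1 : F) * Matrix.diagonal 0
              - Matrix.diagonal 0 * Matrix.single p k (1 : F)) = _
          simp [Matrix.single_mul_single_same, aux_std_mul_diag, aux_diag_mul_std,
            Matrix.single_zero]
        rwa [h2] at h1
      · exact hoff p q hpq
    have := I.smul_mem c key
    simpa [Prod.smul_mk, Matrix.smul_single] using this
  -- Step 5: I = ⊤
  ext x
  simp only [Submodule.mem_top, iff_true]
  have hx : x = (∑ j : Fin n, x.1 j • ((Pi.single j 1, 0) :
      (Fin n → F) × Matrix (Fin n) (Fin n) F))
      + ∑ p : Fin n, ∑ q : Fin n, ((0, Matrix.single p q (x.2 p q)) :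
        (Fin n → F) × Matrix (Fin n) (Fin n) F) := by
    refine Prod.ext ?_ ?_
    · simp only [Prod.fst_add, Prod.fst_sum, Prod.smul_mk, Prod.mk.injEq]
      ext k
      simp [Finset.sum_apply, Pi.single_apply, mul_ite, Finset.sum_ite_eq]
    · simp only [Prod.snd_add, Prod.snd_sum, Prod.smul_mk, smul_zero]
      simpa using (Matrix.matrix_eq_sum_single x.2)
  rw [hx]
  exact I.add_mem
    (I.sum_mem fun j _ => I.smul_mem _ (hvec j))
    (I.sum_mem fun p _ => I.sum_mem fun q _ => hstd p q _)
end

section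
/- The superalgebra B_{n|n} = F^n ⊕ [F^n] is a right-alternative superalgebra: for all homogeneous x, y, z, (x,y,z) + (−1)^{|y||z|}(x,z,y) = 0. -/
def cyc {F : Type*} {n : ℕ} (a : Fin n → F) : Fin n → F := fun i => a (finRotate n i)

def bnnMul (F : Type*) [Field F] (n : ℕ) :
    ((Fin n → F) × (Fin n → F)) → ((Fin n → F) × (Fin n → F)) →
    ((Fin n → F) × (Fin n → F)) :=
  fun a b => (a.1 * b.1 + a.2 * b.2, a.1 * b.2 + a.2 * cyc b.1)

def bnnEven (F : Type*) [Field F] (n : ℕ) : Set ((Fin n → F) × (Fin n → F)) :=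
  {a | a.2 = 0}

def bnnOdd (F : Type*) [Field F] (n : ℕ) : Set ((Fin n → F) × (Fin n → F)) :=
  {a | a.1 = 0}

def bnnAssoc (F : Type*) [Field F] (n : ℕ)
    (x y z : (Fin n → F) × (Fin n → F)) : (Fin n → F) × (Fin n → F) :=
  bnnMul F n (bnnMul F n x y) z - bnnMul F n x (bnnMul F n y z)

/-- `B_{n|n}` is a right-alternative superalgebra: for homogeneous `x,y,z`,
`(x,y,z) + (−1)^{|y||z|}(x,z,y) = 0`. -/
theorem bnn_right_alternative (F : Type*) [Field F] (n : ℕ) :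
    ∀ x y z : (Fin n → F) × (Fin n → F),
      x ∈ bnnEven F n ∪ bnnOdd F n →
      y ∈ bnnEven F n ∪ bnnOdd F n →
      z ∈ bnnEven F n ∪ bnnOdd F n →
      ((y ∈ bnnOdd F n → z ∈ bnnOdd F n →
          bnnAssoc F n x y z - bnnAssoc F n x z y = 0) ∧
       ((y ∈ bnnEven F n ∨ z ∈ bnnEven F n) →
          bnnAssoc F n x y z + bnnAssoc F n x z y = 0)) := by
  rintro ⟨x1, x2⟩ ⟨y1, y2⟩ ⟨z1, z2⟩ hx hy hz
  simp only [bnnEven, bnnOdd, Set.mem_union, Set.mem_setOf_eq] at hx hy hz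
  constructor
  · intro hy' hz'
    simp only [bnnOdd, Set.mem_setOf_eq] at hy' hz'
    subst hy' hz'
    rcases hx with hx | hx <;> subst hx <;>
      refine Prod.ext (funext fun i => ?_) (funext fun i => ?_) <;>
      simp [bnnAssoc, bnnMul, cyc] <;> ring
  · rintro (hy' | hz')
    · simp only [bnnEven, Set.mem_setOf_eq] at hy'
      subst hy'
      rcases hx with hx | hx <;> subst hx <;>
        rcases hz with hz | hz <;> subst hz <;>
        refine Prod.ext (funext fun i => ?_) (funext fun i => ?_) <;>
        simp [bnnAssoc, bnnMul, cyc] <;> ring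
    · simp only [bnnEven, Set.mem_setOf_eq] at hz'
      subst hz'
      rcases hx with hx | hx <;> subst hx <;>
        rcases hy with hy | hy <;> subst hy <;>
        refine Prod.ext (funext fun i => ?_) (funext fun i => ?_) <;>
        simp [bnnAssoc, bnnMul, cyc] <;> ring
end

section
/- For n > 1, the superalgebra B_{n|n} is a simple superalgebra: it has no nonzero proper graded two-sided ideals. -/
/-- For `n > 1`, the superalgebra `B_{n|n}` is simple: any graded two-sided
ideal (an `F`-subspace closed under multiplication by arbitrary elements and
under the projections onto the even and odd parts) is `0` or everything. -/
theorem bnn_simple (F : Type*) [Field F] (n : ℕ) (hn : 1 < n)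
    (I : Submodule F ((Fin n → F) × (Fin n → F)))
    (hleft : ∀ a, ∀ b ∈ I, bnnMul F n a b ∈ I)
    (hright : ∀ a, ∀ b ∈ I, bnnMul F n b a ∈ I)
    (hgraded : ∀ b ∈ I, ((b.1, 0) : (Fin n → F) × (Fin n → F)) ∈ I ∧
      ((0, b.2) : (Fin n → F) × (Fin n → F)) ∈ I) :
    I = ⊥ ∨ I = ⊤ := by
  haveI : NeZero n := ⟨by omega⟩
  by_cases hI : I = ⊥
  · exact Or.inl hI
  right
  obtain ⟨x, hxI, hx0⟩ := Submodule.exists_mem_ne_zero_of_ne_bot hI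
  -- basic multiplication facts
  have hsm : ∀ (i : Fin n) (c : F) (v : Fin n → F),
      (Pi.single i c) * v = Pi.single i (c * v i) := by
    intro i c v; funext j
    by_cases h : j = i
    · subst h; simp [Pi.mul_apply, Pi.single_apply]
    · simp [Pi.mul_apply, Pi.single_apply, h]
  have hcyc : ∀ i : Fin n, cyc (Pi.single i (1:F)) = Pi.single (i - 1) 1 := by
    intro i; funext j
    have h1 : finRotate n j = j + 1 := by
      cases n with
      | zero => exact absurd hn (by omega)
      | succ m => exact finRotate_succ_apply j
    simp [cyc, h1, Pi.single_apply, eq_sub_iff_add_eq]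
  have hcyc0 : cyc (0 : Fin n → F) = 0 := by funext j; simp [cyc]
  set e : Fin n → (Fin n → F) := fun i => Pi.single i 1 with he
  -- step lemmas
  have hEO : ∀ i : Fin n, (e i, (0:Fin n → F)) ∈ I → ((0:Fin n → F), e (i - 1)) ∈ I := by
    intro i h
    have := hleft ((0:Fin n → F), e (i-1)) _ h
    have heq : bnnMul F n ((0:Fin n → F), e (i-1)) (e i, 0) = ((0:Fin n → F), e (i-1)) := by
      simp only [bnnMul, he]
      rw [hcyc]
      ext j <;> simp [hsm, Pi.single_apply]
    rwa [heq] at this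
  have hOE : ∀ i : Fin n, ((0:Fin n → F), e i) ∈ I → (e i, (0:Fin n → F)) ∈ I := by
    intro i h
    have := hleft ((0:Fin n → F), e i) _ h
    have heq : bnnMul F n ((0:Fin n → F), e i) (0, e i) = (e i, (0:Fin n → F)) := by
      simp only [bnnMul, he, hcyc0]
      ext j <;> simp [hsm, Pi.single_apply]
    rwa [heq] at this
  -- extraction lemmas
  have hextE : ∀ v : Fin n → F, (v, (0:Fin n → F)) ∈ I → ∀ i, v i ≠ 0 →
      (e i, (0:Fin n → F)) ∈ I := by
    intro v hv i hvi
    have := hleft (Pi.single i (v i)⁻¹, 0) _ hv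
    have heq : bnnMul F n (Pi.single i (v i)⁻¹, 0) (v, 0) = (e i, (0:Fin n → F)) := by
      simp only [bnnMul, he]
      ext j <;> simp [hsm, inv_mul_cancel₀ hvi]
    rwa [heq] at this
  have hextO : ∀ v : Fin n → F, ((0:Fin n → F), v) ∈ I → ∀ i, v i ≠ 0 →
      ((0:Fin n → F), e i) ∈ I := by
    intro v hv i hvi
    have := hleft (Pi.single i (v i)⁻¹, 0) _ hv
    have heq : bnnMul F n (Pi.single i (v i)⁻¹, 0) (0, v) = ((0:Fin n → F), e i) := by
      simp only [bnnMul, he, hcyc0]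
      ext j <;> simp [hsm, inv_mul_cancel₀ hvi]
    rwa [heq] at this
  -- get a starting basis vector
  have hstart : ∃ i : Fin n, (e i, (0:Fin n → F)) ∈ I := by
    obtain ⟨h1, h2⟩ := hgraded x hxI
    rcases (em (x.1 = 0)) with hx1 | hx1
    · have hx2 : x.2 ≠ 0 := by
        intro hx2; exact hx0 (Prod.ext hx1 hx2)
      obtain ⟨i, hi⟩ := Function.ne_iff.mp hx2
      exact ⟨i, hOE i (hextO x.2 h2 i hi)⟩
    · obtain ⟨i, hi⟩ := Function.ne_iff.mp hx1
      exact ⟨i, hextE x.1 h1 i hi⟩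
  obtain ⟨i, hi⟩ := hstart
  have hall : ∀ j : Fin n, (e j, (0:Fin n → F)) ∈ I := by
    letI : AddMonoidWithOne (Fin n) := Fin.instAddMonoidWithOne n
    have hk : ∀ k : ℕ, (e (i - (k : Fin n)), (0:Fin n → F)) ∈ I := by
      intro k
      induction k with
      | zero => simpa using hi
      | succ k ih =>
        have := hOE _ (hEO _ ih)
        rw [Nat.cast_add, Nat.cast_one, sub_add_eq_sub_sub]
        exact this
    intro j
    have := hk (i - j : Fin n).val
    rwa [Fin.cast_val_eq_self, sub_sub_cancel] at this
  have hallO : ∀ j : Fin n, ((0:Fin n → F), e j) ∈ I := by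
    intro j
    have := hEO (j + 1) (hall (j + 1))
    rwa [add_sub_cancel_right] at this
  -- conclude
  rw [Submodule.eq_top_iff']
  intro p
  have h1 : (p.1, (0:Fin n → F)) ∈ I := by
    have heq : (p.1, (0:Fin n → F)) = ∑ j, p.1 j • (e j, (0:Fin n → F)) := by
      rw [Prod.ext_iff]
      constructor
      · rw [Prod.fst_sum]
        simp only [Prod.smul_mk, Prod.fst]
        rw [← Finset.univ_sum_single p.1]
        congr 1; funext j
        rw [he]; ext m; simp [Pi.single_apply, mul_comm]
      · rw [Prod.snd_sum]; simp
    rw [heq]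
    exact Submodule.sum_mem I fun j _ => Submodule.smul_mem I _ (hall j)
  have h2 : ((0:Fin n → F), p.2) ∈ I := by
    have heq : ((0:Fin n → F), p.2) = ∑ j, p.2 j • ((0:Fin n → F), e j) := by
      rw [Prod.ext_iff]
      constructor
      · rw [Prod.fst_sum]; simp
      · rw [Prod.snd_sum]
        simp only [Prod.smul_mk, Prod.snd]
        rw [← Finset.univ_sum_single p.2]
        congr 1; funext j
        rw [he]; ext m; simp [Pi.single_apply, mul_comm]
    rw [heq]
    exact Submodule.sum_mem I fun j _ => Submodule.smul_mem I _ (hallO j)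
  have : p = (p.1, (0:Fin n → F)) + ((0:Fin n → F), p.2) := by
    ext <;> simp
  rw [this]
  exact Submodule.add_mem I h1 h2
end

section
/- For every ν ∈ F, the superalgebra B_{2|2}(ν) = F^2 ⊕ [F^2] is a right-alternative superalgebra: for all homogeneous x,y,z, (x,y,z) + (−1)^{|y||z|}(x,z,y) = 0. -/
/-- The swap `(a₁,a₂)* = (a₂,a₁)`. -/
def swp {F : Type*} (a : F × F) : F × F := (a.2, a.1)

/-- `χ(a₁,a₂) = (a₁+a₂, a₁+ν a₂)`. -/
def chi {F : Type*} [Field F] (ν : F) (a : F × F) : F × F :=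
  (a.1 + a.2, a.1 + ν * a.2)

/-- The superalgebra `B_{2|2}(ν) = F² ⊕ [F²]`, with `x·y = xy`,
`[x]·[y] = x·χ(y)`, `x·[y] = [xy]`, `[x]·y = [x·y*]`. -/
def b22Mul (F : Type*) [Field F] (ν : F) :
    ((F × F) × (F × F)) → ((F × F) × (F × F)) → ((F × F) × (F × F)) :=
  fun a b => (a.1 * b.1 + a.2 * chi ν b.2, a.1 * b.2 + a.2 * swp b.1)

/-- Even elements of `B_{2|2}(ν)`. -/
def b22Even (F : Type*) [Field F] : Set ((F × F) × (F × F)) := {a | a.2 = 0}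

/-- Odd elements of `B_{2|2}(ν)`. -/
def b22Odd (F : Type*) [Field F] : Set ((F × F) × (F × F)) := {a | a.1 = 0}

/-- The associator in `B_{2|2}(ν)`. -/
def b22Assoc (F : Type*) [Field F] (ν : F) (x y z : (F × F) × (F × F)) :
    (F × F) × (F × F) :=
  b22Mul F ν (b22Mul F ν x y) z - b22Mul F ν x (b22Mul F ν y z)

/-- `B_{2|2}(ν)` is a right-alternative superalgebra: for homogeneous
`x,y,z`, `(x,y,z) + (−1)^{|y||z|}(x,z,y) = 0`. -/
theorem b22_right_alternative (F : Type*) [Field F] (ν : F) :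
    ∀ x y z : (F × F) × (F × F),
      x ∈ b22Even F ∪ b22Odd F →
      y ∈ b22Even F ∪ b22Odd F →
      z ∈ b22Even F ∪ b22Odd F →
      ((y ∈ b22Odd F → z ∈ b22Odd F →
          b22Assoc F ν x y z - b22Assoc F ν x z y = 0) ∧
       ((y ∈ b22Even F ∨ z ∈ b22Even F) →
          b22Assoc F ν x y z + b22Assoc F ν x z y = 0)) := by
  rintro ⟨⟨x1,x2⟩,⟨x3,x4⟩⟩ ⟨⟨y1,y2⟩,⟨y3,y4⟩⟩ ⟨⟨z1,z2⟩,⟨z3,z4⟩⟩ hx hy hz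
  simp only [b22Even, b22Odd, Set.mem_union, Set.mem_setOf_eq, Prod.mk.injEq, Prod.mk_zero_zero,
    Prod.ext_iff, Prod.fst_zero, Prod.snd_zero] at hx hy hz ⊢
  constructor
  · intro hy' hz'
    obtain ⟨hy1, hy2⟩ := hy'
    obtain ⟨hz1, hz2⟩ := hz'
    subst hy1 hy2 hz1 hz2
    simp only [b22Assoc, b22Mul, chi, swp, Prod.mk.injEq, Prod.ext_iff, Prod.fst_sub,
      Prod.snd_sub, Prod.fst_mul, Prod.snd_mul, Prod.fst_add, Prod.snd_add, sub_eq_zero]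
    constructor <;> constructor <;> ring
  · rintro (⟨hy1, hy2⟩ | ⟨hz1, hz2⟩) <;> subst_vars <;>
      rcases hx with (⟨h1,h2⟩|⟨h1,h2⟩) <;> rcases hz with (⟨h3,h4⟩|⟨h3,h4⟩) <;>
      rcases hy with (⟨h5,h6⟩|⟨h5,h6⟩) <;> subst_vars <;>
    · simp only [b22Assoc, b22Mul, chi, swp, Prod.mk.injEq, Prod.ext_iff, Prod.fst_sub,
        Prod.snd_sub, Prod.fst_mul, Prod.snd_mul, Prod.fst_add, Prod.snd_add, Prod.fst_zero,
        Prod.snd_zero]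
      refine ⟨⟨?_,?_⟩,?_,?_⟩ <;> ring
end

section
/- The superalgebra B_{2|2}(ν) is a simple superalgebra for every ν ∈ F: it has no nonzero proper graded two-sided ideals. -/
/-- For every `ν ∈ F`, the superalgebra `B_{2|2}(ν)` is simple: any graded
two-sided ideal is `0` or everything. -/
theorem b22_simple (F : Type*) [Field F] (ν : F)
    (I : Submodule F ((F × F) × (F × F)))
    (hleft : ∀ a, ∀ b ∈ I, b22Mul F ν a b ∈ I)
    (hright : ∀ a, ∀ b ∈ I, b22Mul F ν b a ∈ I)
    (hgraded : ∀ b ∈ I, ((b.1, 0) : (F × F) × (F × F)) ∈ I ∧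
      ((0, b.2) : (F × F) × (F × F)) ∈ I) :
    I = ⊥ ∨ I = ⊤ := by
  by_cases hbot : I = ⊥
  · exact Or.inl hbot
  right
  -- Key lemma: if (0,(1,0)) ∈ I then I = ⊤.
  have ho1top : ((0, ((1:F), (0:F))) : (F × F) × (F × F)) ∈ I → I = ⊤ := by
    intro h1
    have he1 : ((((1:F), (0:F)), 0) : (F × F) × (F × F)) ∈ I := by
      have := hleft ((0 : F × F), ((1:F), (0:F))) _ h1
      simpa [b22Mul, chi, swp, Prod.ext_iff, Prod.mk_zero_zero] using this
    have he2 : ((((0:F), (1:F)), 0) : (F × F) × (F × F)) ∈ I := by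
      have := hleft ((0 : F × F), ((0:F), (1:F))) _ h1
      simpa [b22Mul, chi, swp, Prod.ext_iff, Prod.mk_zero_zero] using this
    have ho2 : ((0, ((0:F), (1:F))) : (F × F) × (F × F)) ∈ I := by
      have := hleft ((0 : F × F), ((0:F), (1:F))) _ he1
      simpa [b22Mul, chi, swp, Prod.ext_iff, Prod.mk_zero_zero] using this
    rw [Submodule.eq_top_iff']
    rintro ⟨⟨a, b⟩, ⟨c, d⟩⟩
    have hv : ((((a, b), (c, d))) : (F × F) × (F × F)) =
        a • ((((1:F), (0:F)), 0) : (F × F) × (F × F))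
        + b • ((((0:F), (1:F)), 0) : (F × F) × (F × F))
        + c • ((0, ((1:F), (0:F))) : (F × F) × (F × F))
        + d • ((0, ((0:F), (1:F))) : (F × F) × (F × F)) := by
      simp [Prod.ext_iff]
    rw [hv]
    exact add_mem (add_mem (add_mem (I.smul_mem _ he1) (I.smul_mem _ he2))
      (I.smul_mem _ h1)) (I.smul_mem _ ho2)
  -- If (0,(0,1)) ∈ I then I = ⊤.
  have ho2top : ((0, ((0:F), (1:F))) : (F × F) × (F × F)) ∈ I → I = ⊤ := by
    intro h2
    have he2 : ((((0:F), (1:F)), 0) : (F × F) × (F × F)) ∈ I := by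
      have := hright ((0 : F × F), ((1:F), (0:F))) _ h2
      simpa [b22Mul, chi, swp, Prod.ext_iff, Prod.mk_zero_zero] using this
    have ho1 : ((0, ((1:F), (0:F))) : (F × F) × (F × F)) ∈ I := by
      have := hleft ((0 : F × F), ((1:F), (0:F))) _ he2
      simpa [b22Mul, chi, swp, Prod.ext_iff, Prod.mk_zero_zero] using this
    exact ho1top ho1
  -- If ((1,0),0) ∈ I then I = ⊤.
  have he1top : ((((1:F), (0:F)), 0) : (F × F) × (F × F)) ∈ I → I = ⊤ := by
    intro h1
    have ho1 : ((0, ((1:F), (0:F))) : (F × F) × (F × F)) ∈ I := by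
      have := hright ((0 : F × F), ((1:F), (0:F))) _ h1
      simpa [b22Mul, chi, swp, Prod.ext_iff] using this
    exact ho1top ho1
  -- If ((0,1),0) ∈ I then I = ⊤.
  have he2top : ((((0:F), (1:F)), 0) : (F × F) × (F × F)) ∈ I → I = ⊤ := by
    intro h2
    have ho2 : ((0, ((0:F), (1:F))) : (F × F) × (F × F)) ∈ I := by
      have := hright ((0 : F × F), ((0:F), (1:F))) _ h2
      simpa [b22Mul, chi, swp, Prod.ext_iff] using this
    exact ho2top ho2
  -- Now take a nonzero element of I.
  obtain ⟨v, hvI, hvne⟩ := (Submodule.ne_bot_iff I).mp hbot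
  obtain ⟨⟨a, b⟩, ⟨c, d⟩⟩ := v
  obtain ⟨heI, hoI⟩ := hgraded _ hvI
  simp only at heI hoI
  by_cases ha : a ≠ 0
  · apply he1top
    have := hright ((((a⁻¹ : F), (0:F)), 0) : (F × F) × (F × F)) _ heI
    simpa [b22Mul, chi, swp, Prod.ext_iff, mul_inv_cancel₀ ha] using this
  by_cases hb : b ≠ 0
  · apply he2top
    have := hright ((((0:F), (b⁻¹ : F)), 0) : (F × F) × (F × F)) _ heI
    simpa [b22Mul, chi, swp, Prod.ext_iff, mul_inv_cancel₀ hb] using this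
  by_cases hc : c ≠ 0
  · apply ho1top
    have h1 := hleft (((((1:F), (0:F)), 0)) : (F × F) × (F × F)) _ hoI
    have h2 := I.smul_mem c⁻¹ h1
    simpa [b22Mul, chi, swp, Prod.ext_iff, inv_mul_cancel₀ hc] using h2
  by_cases hd : d ≠ 0
  · apply ho2top
    have h1 := hleft (((((0:F), (1:F)), 0)) : (F × F) × (F × F)) _ hoI
    have h2 := I.smul_mem d⁻¹ h1
    simpa [b22Mul, chi, swp, Prod.ext_iff, inv_mul_cancel₀ hd] using h2
  push_neg at ha hb hc hd
  exact absurd (by simp [ha, hb, hc, hd, Prod.ext_iff]) hvne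
end

section
/- Let w ∈ M_2(F) have nonzero trace. Then B_{4|4}(w) is a simple superalgebra: it has no nonzero proper graded two-sided ideals. -/
/-- The symplectic involution on `M₂(F)`: `ȳ = tr(y)·1 − y`. -/
def symp {F : Type*} [Field F] (y : Matrix (Fin 2) (Fin 2) F) :
    Matrix (Fin 2) (Fin 2) F :=
  Matrix.trace y • (1 : Matrix (Fin 2) (Fin 2) F) - y

/-- The superalgebra `B_{4|4}(w) = M₂(F) ⊕ [M₂(F)]`, with `x·y = xy`,
`[x]·[y] = (tr y / tr w)·x`, `[x]·y = [x·ȳ]`, and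
`x·[y] = [xy − ([x][y])^D]` where `a^D = aw − wa`. -/
def b44Mul (F : Type*) [Field F] (w : Matrix (Fin 2) (Fin 2) F) :
    (Matrix (Fin 2) (Fin 2) F × Matrix (Fin 2) (Fin 2) F) →
    (Matrix (Fin 2) (Fin 2) F × Matrix (Fin 2) (Fin 2) F) →
    (Matrix (Fin 2) (Fin 2) F × Matrix (Fin 2) (Fin 2) F) :=
  fun a b =>
    (a.1 * b.1 + (Matrix.trace b.2 / Matrix.trace w) • a.2,
     (a.1 * b.2 - (Matrix.trace b.2 / Matrix.trace w) • (a.1 * w - w * a.1))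
       + a.2 * symp b.1)

lemma b44_even_left {F : Type*} [Field F] (w a x : Matrix (Fin 2) (Fin 2) F) :
    b44Mul F w (a, 0) (x, 0) = (a * x, 0) := by
  simp [b44Mul, symp]

lemma b44_even_right {F : Type*} [Field F] (w a x : Matrix (Fin 2) (Fin 2) F) :
    b44Mul F w (x, 0) (a, 0) = (x * a, 0) := by
  simp [b44Mul, symp]

lemma sbm_sandwich {F : Type*} [Field F] (x : Matrix (Fin 2) (Fin 2) F)
    (i j k : Fin 2) :
    Matrix.single k i (1 : F) * x * Matrix.single j k 1
      = x i j • Matrix.single k k 1 := by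
  ext a b
  rcases eq_or_ne b k with rfl | hb
  · rcases eq_or_ne a b with rfl | ha
    · simp
    · rw [Matrix.mul_single_apply_same,
        Matrix.single_mul_apply_of_ne _ _ _ _ _ ha]
      simp [Matrix.single, ha.symm]
  · rw [Matrix.mul_single_apply_of_ne _ _ _ _ _ hb]
    simp [Matrix.single, hb.symm]

lemma one_eq_sum_sbm {F : Type*} [Field F] :
    (1 : Matrix (Fin 2) (Fin 2) F)
      = Matrix.single 0 0 1 + Matrix.single 1 1 1 := by
  ext a b
  fin_cases a <;> fin_cases b <;>
    simp [Matrix.single, Matrix.one_apply]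

/-- For `w` with nonzero trace (char F ≠ 2), `B_{4|4}(w)` is a simple
superalgebra: any graded two-sided ideal is `0` or everything. -/
theorem b44_simple (F : Type*) [Field F] (hchar : (2 : F) ≠ 0)
    (w : Matrix (Fin 2) (Fin 2) F) (hw : Matrix.trace w ≠ 0)
    (I : Submodule F (Matrix (Fin 2) (Fin 2) F × Matrix (Fin 2) (Fin 2) F))
    (hleft : ∀ a, ∀ b ∈ I, b44Mul F w a b ∈ I)
    (hright : ∀ a, ∀ b ∈ I, b44Mul F w b a ∈ I)
    (hgraded : ∀ b ∈ I, ((b.1, 0) : Matrix (Fin 2) (Fin 2) F × Matrix (Fin 2) (Fin 2) F) ∈ I ∧ ((0, b.2) : Matrix (Fin 2) (Fin 2) F × Matrix (Fin 2) (Fin 2) F) ∈ I) :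
    I = ⊥ ∨ I = ⊤ := by
  by_cases hI : I = ⊥
  · exact Or.inl hI
  right
  -- there is a nonzero element of I
  obtain ⟨⟨x, y⟩, hxyI, hxy⟩ := Submodule.ne_bot_iff I |>.mp hI
  obtain ⟨hxI, hyI⟩ := hgraded _ hxyI
  -- Step 1: get a nonzero even element (x₀, 0) ∈ I
  have hEven : ∃ x₀ : Matrix (Fin 2) (Fin 2) F, x₀ ≠ 0 ∧ (x₀, (0 : Matrix (Fin 2) (Fin 2) F)) ∈ I := by
    by_cases hx : x = 0
    · have hy : y ≠ 0 := by
        intro hy; exact hxy (by simp [hx, hy])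
      refine ⟨y, hy, ?_⟩
      have := hright (0, w) _ hyI
      have heq : b44Mul F w ((0 : Matrix (Fin 2) (Fin 2) F), y) (0, w) = (y, 0) := by
        simp [b44Mul, symp, div_self hw]
      rwa [heq] at this
    · exact ⟨x, hx, hxI⟩
  obtain ⟨x₀, hx₀, hx₀I⟩ := hEven
  -- all (a * x₀ * b, 0) ∈ I
  have hsand : ∀ a b : Matrix (Fin 2) (Fin 2) F, (a * x₀ * b, (0 : Matrix (Fin 2) (Fin 2) F)) ∈ I := by
    intro a b
    have h1 := hleft (a, 0) _ hx₀I
    rw [b44_even_left] at h1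
    have h2 := hright (b, 0) _ h1
    rwa [b44_even_right] at h2
  -- find a nonzero entry
  have hentry : ∃ i j, x₀ i j ≠ 0 := by
    by_contra h
    push_neg at h
    exact hx₀ (by ext i j; simpa using h i j)
  obtain ⟨i, j, hij⟩ := hentry
  -- (E k k, 0) ∈ I for each k
  have hEkk : ∀ k : Fin 2, ((Matrix.single k k (1 : F)), (0 : Matrix (Fin 2) (Fin 2) F)) ∈ I := by
    intro k
    have h1 := hsand (Matrix.single k i 1) (Matrix.single j k 1)
    rw [sbm_sandwich] at h1
    have h2 := I.smul_mem (x₀ i j)⁻¹ h1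
    have : (x₀ i j)⁻¹ • ((x₀ i j • Matrix.single k k (1 : F)),
        (0 : Matrix (Fin 2) (Fin 2) F))
        = ((Matrix.single k k (1 : F)), 0) := by
      rw [Prod.smul_mk, inv_smul_smul₀ hij, smul_zero]
    rwa [this] at h2
  -- (1, 0) ∈ I
  have h1I : ((1 : Matrix (Fin 2) (Fin 2) F), (0 : Matrix (Fin 2) (Fin 2) F)) ∈ I := by
    have h := I.add_mem (hEkk 0) (hEkk 1)
    have heq : ((Matrix.single 0 0 (1:F)), (0 : Matrix (Fin 2) (Fin 2) F))
        + ((Matrix.single 1 1 (1:F)), 0)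
        = ((1 : Matrix (Fin 2) (Fin 2) F), 0) := by
      rw [Prod.mk_add_mk, add_zero]
      congr 1
      rw [one_eq_sum_sbm]
    rwa [heq] at h
  -- everything is in I
  rw [Submodule.eq_top_iff']
  rintro ⟨a, b⟩
  have := hleft (a, b) _ h1I
  have heq : b44Mul F w (a, b) (1, 0) = (a, b) := by
    have hs1 : symp (1 : Matrix (Fin 2) (Fin 2) F) = 1 := by
      simp [symp, Matrix.trace_one]
      rw [two_smul]; abel
    simp [b44Mul, hs1]
  rwa [heq] at this
end

section
/- Let B be a right-alternative superalgebra that is a central order in B_{n|n}, with Z = Z(B)_0 the even part of the center. Then there exists nonzero z ∈ Z with z^{2n}·B contained in a finitely generated Z-submodule of B_{n|n}; consequently B embeds in a finitely generated Z-module. -/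
/-- The even part of the center of a graded subring `B ⊆ B_{n|n}`: even
elements of `B` that commute and associate with everything in `B`. -/
def bnnCenter₀ (F : Type*) [Field F] (n : ℕ)
    (B : Set ((Fin n → F) × (Fin n → F))) : Set ((Fin n → F) × (Fin n → F)) :=
  {z | z ∈ B ∧ z.2 = 0 ∧ (∀ x ∈ B, bnnMul F n z x = bnnMul F n x z) ∧
    ∀ x ∈ B, ∀ y ∈ B,
      bnnMul F n (bnnMul F n z x) y = bnnMul F n z (bnnMul F n x y) ∧
      bnnMul F n (bnnMul F n x z) y = bnnMul F n x (bnnMul F n z y) ∧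
      bnnMul F n (bnnMul F n x y) z = bnnMul F n x (bnnMul F n y z)}

namespace BnnAux

variable {F : Type*} [Field F] {n : ℕ}
set_option linter.unusedSectionVars false
open Fin.NatCast

/-- constant even element -/
def Kc (F : Type*) [Field F] (n : ℕ) (c : F) : (Fin n → F) × (Fin n → F) :=
  (fun _ => c, 0)

lemma cyc_apply (a : Fin n → F) (i : Fin n) : cyc a i = a (finRotate n i) := rfl

lemma kc_mul (c : F) (x : (Fin n → F) × (Fin n → F)) :
    bnnMul F n (Kc F n c) x = (fun i => c * x.1 i, fun i => c * x.2 i) := by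
  unfold bnnMul Kc
  refine Prod.ext ?_ ?_ <;> funext i <;>
    simp [cyc_apply, Pi.add_apply, Pi.mul_apply]

lemma mul_kc (c : F) (x : (Fin n → F) × (Fin n → F)) :
    bnnMul F n x (Kc F n c) = (fun i => c * x.1 i, fun i => c * x.2 i) := by
  unfold bnnMul Kc
  refine Prod.ext ?_ ?_ <;> funext i <;>
    simp [cyc_apply, Pi.add_apply, Pi.mul_apply, mul_comm]

lemma kc_center (B : Set ((Fin n → F) × (Fin n → F))) (c : F) (h : Kc F n c ∈ B) :
    Kc F n c ∈ bnnCenter₀ F n B := by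
  refine ⟨h, rfl, ?_, ?_⟩
  · intro x hx; rw [kc_mul, mul_kc]
  · intro x hx y hy
    refine ⟨?_, ?_, ?_⟩ <;>
    · rw [show (bnnMul F n) = (fun a b => ((a.1 * b.1 + a.2 * b.2,
        a.1 * b.2 + a.2 * cyc b.1) : (Fin n → F) × (Fin n → F))) from rfl]
      refine Prod.ext ?_ ?_ <;> funext i <;>
        simp [cyc_apply, Pi.add_apply, Pi.mul_apply, Kc] <;> ring

lemma iterate_kc_mul (c : F) (k : ℕ) (x : (Fin n → F) × (Fin n → F)) :
    (fun y => bnnMul F n (Kc F n c) y)^[k] x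
      = (fun i => c ^ k * x.1 i, fun i => c ^ k * x.2 i) := by
  induction k with
  | zero => simp
  | succ k ih =>
    rw [Function.iterate_succ_apply', ih, kc_mul]
    refine Prod.ext ?_ ?_ <;> funext i <;> simp <;> ring

lemma iterate_finRotate {m : ℕ} (j : Fin (m + 1)) (k : ℕ) :
    (finRotate (m + 1))^[k] j = j + (k : Fin (m + 1)) := by
  induction k with
  | zero => simp
  | succ k ih =>
    rw [Function.iterate_succ_apply', ih, finRotate_succ_apply]
    push_cast
    abel

lemma exists_iterate_finRotate {m : ℕ} (j i : Fin (m + 1)) :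
    ∃ k : ℕ, (finRotate (m + 1))^[k] j = i := by
  refine ⟨(i - j).val, ?_⟩
  rw [iterate_finRotate, Fin.cast_val_eq_self]
  exact add_sub_cancel j i

lemma const_of_rot {m : ℕ} (u : Fin (m + 1) → F) (i₀ : Fin (m + 1))
    (h : ∀ i, u i = u i₀ → u (finRotate (m + 1) i) = u i) (i : Fin (m + 1)) :
    u i = u i₀ := by
  obtain ⟨k, hk⟩ := exists_iterate_finRotate i₀ i
  subst hk
  induction k with
  | zero => simp
  | succ k ih =>
    rw [Function.iterate_succ_apply', h _ ih, ih]

lemma sum_mem_of_closed {α β : Type*} [AddCommMonoid β] (B : Set β)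
    (hadd : ∀ a ∈ B, ∀ b ∈ B, a + b ∈ B) (s : Finset α) (hs : s.Nonempty)
    (f : α → β) (hf : ∀ a ∈ s, f a ∈ B) : ∑ a ∈ s, f a ∈ B := by
  classical
  induction s using Finset.cons_induction with
  | empty => exact absurd hs (by simp)
  | cons a s ha ih =>
    rw [Finset.sum_cons]
    rcases s.eq_empty_or_nonempty with h | h
    · subst h; simpa using hf a (Finset.mem_cons_self a _)
    · exact hadd _ (hf a (Finset.mem_cons_self a _)) _
        (ih h fun x hx => hf x (Finset.mem_cons.mpr (Or.inr hx)))

end BnnAux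

open BnnAux

/-- If `B` is a right-alternative superalgebra which is a central order in
`B_{n|n}`, with `Z = Z(B)₀`, then there is a nonzero `z ∈ Z` with `z^{2n}·B`
contained in a finitely generated `Z`-submodule of `B_{n|n}`; consequently `B`
embeds in a finitely generated `Z`-module. -/
theorem bnn_central_order_embeds (F : Type*) [Field F] (n : ℕ) (hn : 1 < n)
    (B : Set ((Fin n → F) × (Fin n → F)))
    (haddB : ∀ a ∈ B, ∀ b ∈ B, a + b ∈ B) (hnegB : ∀ a ∈ B, -a ∈ B)
    (hmulB : ∀ a ∈ B, ∀ b ∈ B, bnnMul F n a b ∈ B)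
    -- B is graded: it contains the even and odd parts of each of its elements
    (hgraded : ∀ b ∈ B, ((b.1, 0) : (Fin n → F) × (Fin n → F)) ∈ B)
    -- Z contains no zero divisors of B
    (hnzd : ∀ z ∈ bnnCenter₀ F n B, z ≠ 0 → ∀ b ∈ B, bnnMul F n z b = 0 → b = 0)
    -- Z⁻¹B is all of B_{n|n}: every element is a fraction over B
    (hloc : ∀ a : (Fin n → F) × (Fin n → F),
      ∃ z ∈ bnnCenter₀ F n B, z ≠ 0 ∧ bnnMul F n z a ∈ B) :
    ∃ z ∈ bnnCenter₀ F n B, z ≠ 0 ∧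
      ∃ (m : ℕ) (g : Fin m → (Fin n → F) × (Fin n → F)),
        ∀ b ∈ B, ∃ c : Fin m → (Fin n → F) × (Fin n → F),
          (∀ i, c i ∈ bnnCenter₀ F n B) ∧
          (fun x => bnnMul F n z x)^[2 * n] b = ∑ i, bnnMul F n (c i) (g i) := by
  classical
  obtain ⟨m0, rfl⟩ : ∃ m0, n = m0 + 1 := ⟨n - 1, by omega⟩
  -- Step 1: an odd element (0, z0.1) of B
  obtain ⟨z0, hz0Z, hz0ne, hz0B⟩ := hloc (0, fun _ => (1:F))
  have hz02 : z0.2 = 0 := hz0Z.2.1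
  have hθB : ((0, z0.1) : (Fin (m0+1) → F) × (Fin (m0+1) → F)) ∈ B := by
    have h := hz0B
    have e : bnnMul F (m0+1) z0 (0, fun _ => (1:F)) = (0, z0.1) := by
      unfold bnnMul
      refine Prod.ext ?_ ?_ <;> funext i <;>
        simp [cyc_apply, hz02]
    rwa [e] at h
  -- Step 2: z0.1 is a nonzero constant lam
  have hu0 : z0.1 ≠ 0 := by
    intro h
    exact hz0ne (Prod.ext h hz02)
  obtain ⟨i₀, hi₀⟩ : ∃ i, z0.1 i ≠ 0 := Function.ne_iff.mp hu0
  set lam : F := z0.1 i₀ with hlam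
  have hlamne : lam ≠ 0 := hi₀
  have hcomm := hz0Z.2.2.1 _ hθB
  have hstep : ∀ i, z0.1 i = z0.1 i₀ → z0.1 (finRotate (m0+1) i) = z0.1 i := by
    intro i hi
    have h2 := congrFun (congrArg Prod.snd hcomm) i
    simp [bnnMul, cyc_apply, hz02] at h2
    have hne : z0.1 i ≠ 0 := by rw [hi]; exact hi₀
    rw [finRotate_succ_apply]
    rcases h2 with h2 | h2
    · exact h2.symm
    · exact absurd h2 hne
  have huconst : ∀ i, z0.1 i = lam := fun i => const_of_rot z0.1 i₀ hstep i
  have hθ'B : (((0 : Fin (m0+1) → F), fun _ => lam) : (Fin (m0+1) → F) × (Fin (m0+1) → F)) ∈ B := by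
    have e : (((0 : Fin (m0+1) → F), fun _ => lam) : (Fin (m0+1) → F) × (Fin (m0+1) → F)) = (0, z0.1) := by
      refine Prod.ext rfl ?_
      funext i
      exact (huconst i).symm
    rw [e]; exact hθB
  set θ : (Fin (m0+1) → F) × (Fin (m0+1) → F) := ((0 : Fin (m0+1) → F), fun _ => lam) with hθdef
  -- τ = lam^2 is a constant of B
  have hτB : Kc F (m0+1) (lam * lam) ∈ B := by
    have e : bnnMul F (m0+1) θ θ = Kc F (m0+1) (lam * lam) := by
      unfold bnnMul Kc
      refine Prod.ext ?_ ?_ <;> funext i <;> simp [cyc_apply, hθdef]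
    rw [← e]; exact hmulB θ hθ'B θ hθ'B
  -- every central element is constant
  have hZconst : ∀ z ∈ bnnCenter₀ F (m0+1) B, ∀ i, z.1 i = z.1 i₀ := by
    intro z hz
    have hcz := hz.2.2.1 θ hθ'B
    intro i
    refine const_of_rot z.1 i₀ (fun i _ => ?_) i
    have h2 := congrFun (congrArg Prod.snd hcz) i
    simp [bnnMul, cyc_apply, hz.2.1, hθdef, finRotate_succ_apply] at h2
    rw [finRotate_succ_apply]
    have := mul_left_cancel₀ hlamne (by rw [← h2]; ring : lam * z.1 (i+1) = lam * z.1 i)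
    exact this
  -- projections: per-coordinate denominators
  have hproj : ∀ j : Fin (m0+1), ∃ r : F, r ≠ 0 ∧
      (((fun i => r * (if i = j then (1:F) else 0)), (0 : Fin (m0+1) → F)) :
        (Fin (m0+1) → F) × (Fin (m0+1) → F)) ∈ B := by
    intro j
    obtain ⟨zj, hzjZ, hzjne, hzjB⟩ := hloc ((fun i => if i = j then (1:F) else 0), 0)
    refine ⟨zj.1 i₀, ?_, ?_⟩
    · intro h0
      apply hzjne
      refine Prod.ext ?_ hzjZ.2.1
      funext i
      rw [hZconst zj hzjZ i, h0]
      rfl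
    · have e : bnnMul F (m0+1) zj ((fun i => if i = j then (1:F) else 0), 0)
          = ((fun i => zj.1 i₀ * (if i = j then (1:F) else 0)), (0 : Fin (m0+1) → F)) := by
        unfold bnnMul
        refine Prod.ext ?_ ?_ <;> funext i <;>
          simp [cyc_apply, hzjZ.2.1, hZconst zj hzjZ i]
      rwa [e] at hzjB
  choose r hrne hrB using hproj
  set L : F := lam * lam with hLdef
  have hLne : L ≠ 0 := mul_ne_zero hlamne hlamne
  -- shifting a coordinate-supported even element one step down
  have hdown : ∀ (μ : F) (j : Fin (m0+1)),
      (((fun i => μ * (if i = j then (1:F) else 0)), (0 : Fin (m0+1) → F)) :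
        (Fin (m0+1) → F) × (Fin (m0+1) → F)) ∈ B →
      (((fun i => (L * μ) * (if i = j - 1 then (1:F) else 0)), (0 : Fin (m0+1) → F)) :
        (Fin (m0+1) → F) × (Fin (m0+1) → F)) ∈ B := by
    intro μ j hB1
    have h1 := hmulB θ hθ'B _ hB1
    have e1 : bnnMul F (m0+1) θ ((fun i => μ * (if i = j then (1:F) else 0)), 0)
        = (0, fun i => (lam * μ) * (if i = j - 1 then (1:F) else 0)) := by
      unfold bnnMul
      refine Prod.ext ?_ ?_ <;> funext i <;>
        simp [cyc_apply, hθdef, finRotate_succ_apply]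
      have hiff : (i + 1 = j) ↔ (i = j - 1) := by
        rw [eq_sub_iff_add_eq]
      by_cases hc : i + 1 = j
      · simp [hc, hiff.mp hc]
      · simp only [if_neg hc, if_neg (fun h => hc (hiff.mpr h))]
    rw [e1] at h1
    have h2 := hmulB θ hθ'B _ h1
    have e2 : bnnMul F (m0+1) θ ((0 : Fin (m0+1) → F),
          fun i => (lam * μ) * (if i = j - 1 then (1:F) else 0))
        = ((fun i => (L * μ) * (if i = j - 1 then (1:F) else 0)), (0 : Fin (m0+1) → F)) := by
      unfold bnnMul
      refine Prod.ext ?_ ?_ <;> funext i <;>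
        simp [cyc_apply, hθdef, hLdef] <;> ring
    rwa [e2] at h2
  -- padding with L
  have hpad : ∀ (μ : F) (j : Fin (m0+1)),
      (((fun i => μ * (if i = j then (1:F) else 0)), (0 : Fin (m0+1) → F)) :
        (Fin (m0+1) → F) × (Fin (m0+1) → F)) ∈ B →
      (((fun i => (L * μ) * (if i = j then (1:F) else 0)), (0 : Fin (m0+1) → F)) :
        (Fin (m0+1) → F) × (Fin (m0+1) → F)) ∈ B := by
    intro μ j hB1
    have h1 := hmulB _ hτB _ hB1
    have e1 : bnnMul F (m0+1) (Kc F (m0+1) (lam*lam)) ((fun i => μ * (if i = j then (1:F) else 0)), 0)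
        = ((fun i => (L * μ) * (if i = j then (1:F) else 0)), (0 : Fin (m0+1) → F)) := by
      rw [kc_mul]
      refine Prod.ext ?_ ?_ <;> funext i <;> simp [hLdef] <;> ring
    rwa [e1] at h1
  have hpadIter : ∀ (t : ℕ) (μ : F) (j : Fin (m0+1)),
      (((fun i => μ * (if i = j then (1:F) else 0)), (0 : Fin (m0+1) → F)) :
        (Fin (m0+1) → F) × (Fin (m0+1) → F)) ∈ B →
      (((fun i => (L ^ t * μ) * (if i = j then (1:F) else 0)), (0 : Fin (m0+1) → F)) :
        (Fin (m0+1) → F) × (Fin (m0+1) → F)) ∈ B := by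
    intro t
    induction t with
    | zero => intro μ j h; simpa using h
    | succ t ih =>
      intro μ j h
      have h1 := hpad _ j (ih μ j h)
      have e : (fun i => (L ^ (t+1) * μ) * (if i = j then (1:F) else 0))
          = (fun i => (L * (L ^ t * μ)) * (if i = j then (1:F) else 0)) := by
        funext i; ring
      rw [e]
      exact h1
  open Fin.NatCast in
  have hdownIter : ∀ (k : ℕ) (μ : F) (j : Fin (m0+1)),
      (((fun i => μ * (if i = j then (1:F) else 0)), (0 : Fin (m0+1) → F)) :
        (Fin (m0+1) → F) × (Fin (m0+1) → F)) ∈ B →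
      (((fun i => (L ^ k * μ) * (if i = j - ((k : ℕ) : Fin (m0+1)) then (1:F) else 0)),
        (0 : Fin (m0+1) → F)) : (Fin (m0+1) → F) × (Fin (m0+1) → F)) ∈ B := by
    intro k
    induction k with
    | zero => intro μ j h; simpa using h
    | succ k ih =>
      intro μ j h
      have h1 := ih (L * μ) (j - 1) (hdown μ j h)
      have e : (fun i => (L ^ (k+1) * μ) * (if i = j - (((k+1 : ℕ)) : Fin (m0+1)) then (1:F) else 0))
          = (fun i => (L ^ k * (L * μ)) * (if i = (j - 1) - ((k : ℕ) : Fin (m0+1)) then (1:F) else 0)) := by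
        funext i
        have : j - (((k+1 : ℕ)) : Fin (m0+1)) = (j - 1) - ((k : ℕ) : Fin (m0+1)) := by
          push_cast
          abel
        rw [this]
        ring
      rw [e]
      exact h1
  -- spread to every coordinate with uniform factor L^(m0+1)
  open Fin.NatCast in
  have hall : ∀ (μ : F) (j : Fin (m0+1)),
      (((fun i => μ * (if i = j then (1:F) else 0)), (0 : Fin (m0+1) → F)) :
        (Fin (m0+1) → F) × (Fin (m0+1) → F)) ∈ B →
      ∀ k : Fin (m0+1),
      (((fun i => (L ^ (m0+1) * μ) * (if i = k then (1:F) else 0)), (0 : Fin (m0+1) → F)) :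
        (Fin (m0+1) → F) × (Fin (m0+1) → F)) ∈ B := by
    intro μ j h k
    have h1 := hdownIter (j - k).val μ j h
    rw [Fin.cast_val_eq_self, sub_sub_cancel] at h1
    have h2 := hpadIter ((m0+1) - (j - k).val) _ k h1
    have e : (fun i => (L ^ (m0+1) * μ) * (if i = k then (1:F) else 0))
        = (fun i => (L ^ ((m0+1) - (j-k).val) * (L ^ ((j-k).val) * μ)) * (if i = k then (1:F) else 0)) := by
      funext i
      rw [← mul_assoc, ← pow_add, Nat.sub_add_cancel (le_of_lt (j-k).isLt)]
    rw [e]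
    exact h2
  -- summing the coordinates gives a constant of B
  have hsum : ∀ (ν : F),
      (∀ k : Fin (m0+1),
        (((fun i => ν * (if i = k then (1:F) else 0)), (0 : Fin (m0+1) → F)) :
          (Fin (m0+1) → F) × (Fin (m0+1) → F)) ∈ B) →
      Kc F (m0+1) ν ∈ B := by
    intro ν h
    have hmem := sum_mem_of_closed B haddB Finset.univ Finset.univ_nonempty
      (fun k : Fin (m0+1) =>
        (((fun i => ν * (if i = k then (1:F) else 0)), (0 : Fin (m0+1) → F)) :
          (Fin (m0+1) → F) × (Fin (m0+1) → F))) (fun k _ => h k)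
    have e : (∑ k : Fin (m0+1),
        (((fun i => ν * (if i = k then (1:F) else 0)), (0 : Fin (m0+1) → F)) :
          (Fin (m0+1) → F) × (Fin (m0+1) → F))) = Kc F (m0+1) ν := by
      refine Prod.ext ?_ ?_
      · rw [Prod.fst_sum]
        funext i
        rw [Finset.sum_apply]
        unfold Kc
        simp [Finset.sum_ite_eq]
      · rw [Prod.snd_sum]
        simp [Kc]
    rwa [e] at hmem
  -- final witnesses
  refine ⟨Kc F (m0+1) L, kc_center B L hτB, ?_, (m0+1) + (m0+1),
    Fin.append
      (fun j => (((fun i => (L ^ (2*(m0+1)) * (L ^ (m0+1) * r j)⁻¹) * (if i = j then (1:F) else 0)),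
        (0 : Fin (m0+1) → F))))
      (fun j => (((0 : Fin (m0+1) → F),
        (fun i => (L ^ (2*(m0+1)) * (L ^ (m0+1) * (lam * r j))⁻¹) * (if i = j then (1:F) else 0))))), ?_⟩
  · -- Kc L ≠ 0
    intro h0
    have h1 := congrFun (congrArg Prod.fst h0) i₀
    simp only [Kc] at h1
    exact hLne h1
  · intro b hb
    have hext : ∀ j : Fin (m0+1),
        bnnMul F (m0+1) ((fun i => r j * (if i = j then (1:F) else 0)), 0) b
          = (((fun i => (r j * b.1 j) * (if i = j then (1:F) else 0)),
              (fun i => (r j * b.2 j) * (if i = j then (1:F) else 0)))) := by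
      intro j
      unfold bnnMul
      refine Prod.ext ?_ ?_ <;> funext i <;> simp [cyc_apply] <;>
        by_cases hc : i = j <;> simp [hc] <;> ring
    have hbe : ∀ j, (((fun i => (r j * b.1 j) * (if i = j then (1:F) else 0)),
        (0 : Fin (m0+1) → F)) : (Fin (m0+1) → F) × (Fin (m0+1) → F)) ∈ B := by
      intro j
      have h1 := hmulB _ (hrB j) b hb
      rw [hext j] at h1
      exact hgraded _ h1
    have hbo' : ∀ j, (((0 : Fin (m0+1) → F),
        (fun i => (r j * b.2 j) * (if i = j then (1:F) else 0))) :
          (Fin (m0+1) → F) × (Fin (m0+1) → F)) ∈ B := by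
      intro j
      have h1 := hmulB _ (hrB j) b hb
      rw [hext j] at h1
      have h2 := hgraded _ h1
      have h3 := haddB _ h1 _ (hnegB _ h2)
      have e : ((((fun i => (r j * b.1 j) * (if i = j then (1:F) else 0)),
                 (fun i => (r j * b.2 j) * (if i = j then (1:F) else 0))) :
                   (Fin (m0+1) → F) × (Fin (m0+1) → F))
                 + -((((fun i => (r j * b.1 j) * (if i = j then (1:F) else 0)),
                   (fun i => (r j * b.2 j) * (if i = j then (1:F) else 0))) :
                   (Fin (m0+1) → F) × (Fin (m0+1) → F)).1, (0 : Fin (m0+1) → F)))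
          = (((0 : Fin (m0+1) → F),
              (fun i => (r j * b.2 j) * (if i = j then (1:F) else 0))) :
                (Fin (m0+1) → F) × (Fin (m0+1) → F)) := by
        refine Prod.ext ?_ ?_ <;> funext i <;> simp
      rwa [e] at h3
    have hbo : ∀ j, (((fun i => (lam * (r j * b.2 j)) * (if i = j then (1:F) else 0)),
        (0 : Fin (m0+1) → F)) : (Fin (m0+1) → F) × (Fin (m0+1) → F)) ∈ B := by
      intro j
      have h1 := hmulB θ hθ'B _ (hbo' j)
      have e : bnnMul F (m0+1) θ ((0 : Fin (m0+1) → F),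
            (fun i => (r j * b.2 j) * (if i = j then (1:F) else 0)))
          = (((fun i => (lam * (r j * b.2 j)) * (if i = j then (1:F) else 0)),
              (0 : Fin (m0+1) → F))) := by
        unfold bnnMul
        refine Prod.ext ?_ ?_ <;> funext i <;> simp [cyc_apply, hθdef] <;> ring
      rwa [e] at h1
    have hc1 : ∀ j, Kc F (m0+1) (L ^ (m0+1) * ((r j * b.1 j))) ∈ bnnCenter₀ F (m0+1) B :=
      fun j => kc_center B _ (hsum _ (hall _ j (hbe j)))
    have hc2 : ∀ j, Kc F (m0+1) (L ^ (m0+1) * (lam * (r j * b.2 j))) ∈ bnnCenter₀ F (m0+1) B :=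
      fun j => kc_center B _ (hsum _ (hall _ j (hbo j)))
    refine ⟨Fin.append (fun j => Kc F (m0+1) (L ^ (m0+1) * ((r j * b.1 j))))
        (fun j => Kc F (m0+1) (L ^ (m0+1) * (lam * (r j * b.2 j)))), ?_, ?_⟩
    · intro i
      refine Fin.addCases (fun j => ?_) (fun j => ?_) i
      · rw [Fin.append_left]; exact hc1 j
      · rw [Fin.append_right]; exact hc2 j
    · rw [iterate_kc_mul]
      have e1 : ∀ j : Fin (m0+1),
          bnnMul F (m0+1) (Kc F (m0+1) (L ^ (m0+1) * ((r j * b.1 j))))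
            (((fun i => (L ^ (2*(m0+1)) * (L ^ (m0+1) * r j)⁻¹) * (if i = j then (1:F) else 0)),
              (0 : Fin (m0+1) → F)))
          = (((fun i => (L ^ (2*(m0+1)) * b.1 j) * (if i = j then (1:F) else 0)),
              (0 : Fin (m0+1) → F))) := by
        intro j
        rw [kc_mul]
        have hr := hrne j
        have hLp : L ^ (m0+1) ≠ 0 := pow_ne_zero _ hLne
        refine Prod.ext ?_ ?_ <;> funext i
        · show L ^ (m0+1) * (r j * b.1 j) * ((L ^ (2*(m0+1)) * (L ^ (m0+1) * r j)⁻¹) * _) = _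
          field_simp
        · show L ^ (m0+1) * (r j * b.1 j) * (0 : Fin (m0+1) → F) i = (0 : Fin (m0+1) → F) i
          simp
      have e2 : ∀ j : Fin (m0+1),
          bnnMul F (m0+1) (Kc F (m0+1) (L ^ (m0+1) * (lam * (r j * b.2 j))))
            (((0 : Fin (m0+1) → F),
              (fun i => (L ^ (2*(m0+1)) * (L ^ (m0+1) * (lam * r j))⁻¹) * (if i = j then (1:F) else 0))))
          = (((0 : Fin (m0+1) → F),
              (fun i => (L ^ (2*(m0+1)) * b.2 j) * (if i = j then (1:F) else 0)))) := by
        intro j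
        rw [kc_mul]
        have hr := hrne j
        have hLp : L ^ (m0+1) ≠ 0 := pow_ne_zero _ hLne
        refine Prod.ext ?_ ?_ <;> funext i
        · show L ^ (m0+1) * (lam * (r j * b.2 j)) * (0 : Fin (m0+1) → F) i = (0 : Fin (m0+1) → F) i
          simp
        · show L ^ (m0+1) * (lam * (r j * b.2 j)) * ((L ^ (2*(m0+1)) * (L ^ (m0+1) * (lam * r j))⁻¹) * _) = _
          field_simp
      rw [Fin.sum_univ_add]
      simp only [Fin.append_left, Fin.append_right]
      rw [Finset.sum_congr rfl (fun j _ => e1 j), Finset.sum_congr rfl (fun j _ => e2 j)]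
      refine Prod.ext ?_ ?_
      · rw [Prod.fst_add, Prod.fst_sum, Prod.fst_sum]
        funext i
        simp only [Pi.add_apply, Finset.sum_apply, Pi.zero_apply, mul_ite, mul_one, mul_zero]
        rw [Finset.sum_ite_eq Finset.univ i (fun j => L ^ (2*(m0+1)) * b.1 j)]
        simp
      · rw [Prod.snd_add, Prod.snd_sum, Prod.snd_sum]
        funext i
        simp only [Pi.add_apply, Finset.sum_apply, Pi.zero_apply, mul_ite, mul_one, mul_zero]
        rw [Finset.sum_ite_eq Finset.univ i (fun j => L ^ (2*(m0+1)) * b.2 j)]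
        simp
end

section
/- Let B be a right-alternative superalgebra that is a central order in B_{2|2}(ν), with Z = Z(B)_0. Then there exists nonzero z ∈ Z with z^4·B contained in the Z-module generated by (1,0), (0,1), [(1,0)], [(0,1)]; consequently B embeds in a finitely generated Z-module. -/
/-- The even part of the center of a graded subring `B ⊆ B_{2|2}(ν)`. -/
def b22Center₀ (F : Type*) [Field F] (ν : F) (B : Set ((F × F) × (F × F))) :
    Set ((F × F) × (F × F)) :=
  {z | z ∈ B ∧ z.2 = 0 ∧ (∀ x ∈ B, b22Mul F ν z x = b22Mul F ν x z) ∧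
    ∀ x ∈ B, ∀ y ∈ B,
      b22Mul F ν (b22Mul F ν z x) y = b22Mul F ν z (b22Mul F ν x y) ∧
      b22Mul F ν (b22Mul F ν x z) y = b22Mul F ν x (b22Mul F ν z y) ∧
      b22Mul F ν (b22Mul F ν x y) z = b22Mul F ν x (b22Mul F ν y z)}

lemma b22Mul_def {F : Type*} [Field F] (ν : F) (x y : (F × F) × (F × F)) :
    b22Mul F ν x y = ((x.1.1*y.1.1 + x.2.1*(y.2.1+y.2.2),
      x.1.2*y.1.2 + x.2.2*(y.2.1+ν*y.2.2)),
      (x.1.1*y.2.1 + x.2.1*y.1.2, x.1.2*y.2.2 + x.2.2*y.1.1)) := by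
  simp [b22Mul, chi, swp, Prod.ext_iff, Prod.mul_def, Prod.add_def]

def dg {F : Type*} [Field F] (μ : F) : (F × F) × (F × F) := ((μ, μ), (0, 0))

lemma dg_mul_left {F : Type*} [Field F] (ν μ : F) (x : (F × F) × (F × F)) :
    b22Mul F ν (dg μ) x = ((μ*x.1.1, μ*x.1.2), (μ*x.2.1, μ*x.2.2)) := by
  simp [b22Mul_def, dg]

lemma dg_mul_right {F : Type*} [Field F] (ν μ : F) (x : (F × F) × (F × F)) :
    b22Mul F ν x (dg μ) = ((μ*x.1.1, μ*x.1.2), (μ*x.2.1, μ*x.2.2)) := by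
  simp [b22Mul_def, dg, Prod.ext_iff]; constructor <;> constructor <;> ring

lemma scaled_mul_left {F : Type*} [Field F] (ν μ : F) (x y : (F × F) × (F × F)) :
    b22Mul F ν (((μ*x.1.1, μ*x.1.2), (μ*x.2.1, μ*x.2.2))) y =
      ((μ*(b22Mul F ν x y).1.1, μ*(b22Mul F ν x y).1.2),
       (μ*(b22Mul F ν x y).2.1, μ*(b22Mul F ν x y).2.2)) := by
  simp [b22Mul_def, Prod.ext_iff]; refine ⟨⟨by ring, by ring⟩, by ring, by ring⟩

lemma scaled_mul_right {F : Type*} [Field F] (ν μ : F) (x y : (F × F) × (F × F)) :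
    b22Mul F ν x (((μ*y.1.1, μ*y.1.2), (μ*y.2.1, μ*y.2.2))) =
      ((μ*(b22Mul F ν x y).1.1, μ*(b22Mul F ν x y).1.2),
       (μ*(b22Mul F ν x y).2.1, μ*(b22Mul F ν x y).2.2)) := by
  simp [b22Mul_def, Prod.ext_iff]; refine ⟨⟨by ring, by ring⟩, by ring, by ring⟩

lemma dg_center {F : Type*} [Field F] {ν μ : F} {B : Set ((F × F) × (F × F))}
    (h : dg μ ∈ B) : dg μ ∈ b22Center₀ F ν B := by
  refine ⟨h, rfl, fun x _ => by rw [dg_mul_left, dg_mul_right], fun x _ y _ => ?_⟩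
  refine ⟨?_, ?_, ?_⟩
  · rw [dg_mul_left, dg_mul_left, scaled_mul_left]
  · rw [dg_mul_right, dg_mul_left, scaled_mul_left, scaled_mul_right]
  · rw [dg_mul_right, dg_mul_right, scaled_mul_right]

/-- If `B` is a right-alternative superalgebra which is a central order in
`B_{2|2}(ν)`, with `Z = Z(B)₀`, then there is a nonzero `z ∈ Z` such that
`z⁴·B` lies in the `Z`-module generated by `(1,0), (0,1), [(1,0)],
[(0,1)]`; consequently `B` embeds in a finitely generated `Z`-module. -/
theorem b22_central_order_embeds (F : Type*) [Field F] (ν : F)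
    (B : Set ((F × F) × (F × F)))
    (haddB : ∀ a ∈ B, ∀ b ∈ B, a + b ∈ B) (hnegB : ∀ a ∈ B, -a ∈ B)
    (hmulB : ∀ a ∈ B, ∀ b ∈ B, b22Mul F ν a b ∈ B)
    (hgraded : ∀ b ∈ B, ((b.1, 0) : (F × F) × (F × F)) ∈ B)
    (hnzd : ∀ z ∈ b22Center₀ F ν B, z ≠ 0 → ∀ b ∈ B, b22Mul F ν z b = 0 → b = 0)
    (hloc : ∀ a : (F × F) × (F × F),
      ∃ z ∈ b22Center₀ F ν B, z ≠ 0 ∧ b22Mul F ν z a ∈ B) :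
    ∃ z ∈ b22Center₀ F ν B, z ≠ 0 ∧
      ∀ b ∈ B, ∃ c₁ c₂ c₃ c₄ : (F × F) × (F × F),
        c₁ ∈ b22Center₀ F ν B ∧ c₂ ∈ b22Center₀ F ν B ∧
        c₃ ∈ b22Center₀ F ν B ∧ c₄ ∈ b22Center₀ F ν B ∧
        (fun x => b22Mul F ν z x)^[4] b =
          b22Mul F ν c₁ ((((1 : F), (0 : F)), 0) : (F × F) × (F × F)) +
          b22Mul F ν c₂ ((((0 : F), (1 : F)), 0) : (F × F) × (F × F)) +
          b22Mul F ν c₃ ((0, ((1 : F), (0 : F))) : (F × F) × (F × F)) +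
          b22Mul F ν c₄ ((0, ((0 : F), (1 : F))) : (F × F) × (F × F)) := by
  classical
  -- an odd element of B with nonzero part
  obtain ⟨w₀, hw₀Z, hw₀ne, hw₀B⟩ := hloc ((0,0),(1,1))
  have hw₀2 : w₀.2 = 0 := hw₀Z.2.1
  have hw₀21 : w₀.2.1 = 0 := by rw [hw₀2]; rfl
  have hw₀22 : w₀.2.2 = 0 := by rw [hw₀2]; rfl
  have hx₀ : (((0,0),(w₀.1.1, w₀.1.2)) : (F × F) × (F × F)) ∈ B := by
    have h := hw₀B
    rwa [b22Mul_def, show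
      ((w₀.1.1*0 + w₀.2.1*((1:F)+1), w₀.1.2*0 + w₀.2.2*(1+ν*1)),
       (w₀.1.1*1 + w₀.2.1*0, w₀.1.2*1 + w₀.2.2*0)) =
      (((0,0),(w₀.1.1, w₀.1.2)) : (F × F) × (F × F)) from by
        refine Prod.ext (Prod.ext ?_ ?_) (Prod.ext ?_ ?_) <;>
          simp [hw₀21, hw₀22]] at h
  have hw₀1 : w₀.1 ≠ 0 := by
    intro h
    exact hw₀ne (Prod.ext h hw₀2)
  -- every even-central element is diagonal
  have hdiagZ : ∀ z ∈ b22Center₀ F ν B, z.1.1 = z.1.2 := by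
    intro z hz
    have hz2 : z.2 = 0 := hz.2.1
    have hz21 : z.2.1 = 0 := by rw [hz2]; rfl
    have hz22 : z.2.2 = 0 := by rw [hz2]; rfl
    have hcom := hz.2.2.1 _ hx₀
    rw [b22Mul_def, b22Mul_def] at hcom
    have h1 : z.1.1 * w₀.1.1 + z.2.1 * ((0:F) * z.1.2)⁻¹ * 0 = 0 →
      True := fun _ => trivial
    have e1 := congrArg (fun p => p.2.1) hcom
    have e2 := congrArg (fun p => p.2.2) hcom
    simp only [hz21, hz22] at e1 e2
    by_cases hc : w₀.1.1 = 0
    · have hc2 : w₀.1.2 ≠ 0 := fun hc2 => hw₀1 (Prod.ext hc hc2)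
      have : z.1.1 * w₀.1.2 = z.1.2 * w₀.1.2 := by linear_combination -e2
      exact mul_right_cancel₀ hc2 this
    · have : z.1.1 * w₀.1.1 = z.1.2 * w₀.1.1 := by linear_combination e1
      exact mul_right_cancel₀ hc this
  have hZform : ∀ z ∈ b22Center₀ F ν B, z = dg z.1.1 := by
    intro z hz
    exact Prod.ext (Prod.ext rfl (hdiagZ z hz).symm) hz.2.1
  -- localization scalars for the four basis elements
  obtain ⟨w₁, hw₁Z, hw₁ne, hw₁B⟩ := hloc (((1,0)),(0,0))
  obtain ⟨w₂, hw₂Z, hw₂ne, hw₂B⟩ := hloc (((0,1)),(0,0))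
  obtain ⟨w₃, hw₃Z, hw₃ne, hw₃B⟩ := hloc (((0,0)),(1,0))
  obtain ⟨w₄, hw₄Z, hw₄ne, hw₄B⟩ := hloc (((0,0)),(0,1))
  set μ₁ := w₁.1.1 with hμ₁
  set μ₂ := w₂.1.1 with hμ₂
  set μ₃ := w₃.1.1 with hμ₃
  set μ₄ := w₄.1.1 with hμ₄
  have hw₁d : w₁ = dg μ₁ := hZform _ hw₁Z
  have hw₂d : w₂ = dg μ₂ := hZform _ hw₂Z
  have hw₃d : w₃ = dg μ₃ := hZform _ hw₃Z
  have hw₄d : w₄ = dg μ₄ := hZform _ hw₄Z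
  have hμ₁0 : μ₁ ≠ 0 := fun h => hw₁ne (by rw [hw₁d, h]; rfl)
  have hμ₂0 : μ₂ ≠ 0 := fun h => hw₂ne (by rw [hw₂d, h]; rfl)
  have hμ₃0 : μ₃ ≠ 0 := fun h => hw₃ne (by rw [hw₃d, h]; rfl)
  have hμ₄0 : μ₄ ≠ 0 := fun h => hw₄ne (by rw [hw₄d, h]; rfl)
  have hdgB₁ : dg μ₁ ∈ B := hw₁d ▸ hw₁Z.1
  have hdgB₂ : dg μ₂ ∈ B := hw₂d ▸ hw₂Z.1
  have hdgB₃ : dg μ₃ ∈ B := hw₃d ▸ hw₃Z.1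
  have hdgB₄ : dg μ₄ ∈ B := hw₄d ▸ hw₄Z.1
  -- product of diagonals
  have hdmul : ∀ μ κ : F, dg μ ∈ B → dg κ ∈ B → dg (μ*κ) ∈ B := by
    intro μ κ h1 h2
    have h := hmulB _ h1 _ h2
    rw [dg_mul_left] at h
    simpa [dg] using h
  have hdcongr : ∀ μ κ : F, μ = κ → dg μ ∈ B → dg κ ∈ B := by
    intro μ κ h h1; rwa [h] at h1
  -- the four rectangular units scaled into B
  have hu₁ : (((μ₁,0),(0,0)) : (F × F) × (F × F)) ∈ B := by
    have h := hw₁B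
    rwa [hw₁d, show b22Mul F ν (dg μ₁) (((1,0)),(0,0)) =
      (((μ₁,0),(0,0)) : (F × F) × (F × F)) from by
        rw [dg_mul_left]; refine Prod.ext (Prod.ext ?_ ?_) (Prod.ext ?_ ?_) <;> simp] at h
  have hu₂ : (((0,μ₂),(0,0)) : (F × F) × (F × F)) ∈ B := by
    have h := hw₂B
    rwa [hw₂d, show b22Mul F ν (dg μ₂) (((0,1)),(0,0)) =
      (((0,μ₂),(0,0)) : (F × F) × (F × F)) from by
        rw [dg_mul_left]; refine Prod.ext (Prod.ext ?_ ?_) (Prod.ext ?_ ?_) <;> simp] at h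
  have hu₃ : (((0,0),(μ₃,0)) : (F × F) × (F × F)) ∈ B := by
    have h := hw₃B
    rwa [hw₃d, show b22Mul F ν (dg μ₃) (((0,0)),(1,0)) =
      (((0,0),(μ₃,0)) : (F × F) × (F × F)) from by
        rw [dg_mul_left]; refine Prod.ext (Prod.ext ?_ ?_) (Prod.ext ?_ ?_) <;> simp] at h
  have hu₄ : (((0,0),(0,μ₄)) : (F × F) × (F × F)) ∈ B := by
    have h := hw₄B
    rwa [hw₄d, show b22Mul F ν (dg μ₄) (((0,0)),(0,1)) =
      (((0,0),(0,μ₄)) : (F × F) × (F × F)) from by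
        rw [dg_mul_left]; refine Prod.ext (Prod.ext ?_ ?_) (Prod.ext ?_ ?_) <;> simp] at h
  -- the chosen z
  set lam := μ₁*μ₂*μ₃*μ₄ with hlam
  have hlam0 : lam ≠ 0 := by
    simp only [hlam]
    exact mul_ne_zero (mul_ne_zero (mul_ne_zero hμ₁0 hμ₂0) hμ₃0) hμ₄0
  have hzB : dg lam ∈ B :=
    hdcongr _ _ (by rw [hlam]) (hdmul _ _ (hdmul _ _ (hdmul _ _ hdgB₁ hdgB₂) hdgB₃) hdgB₄)
  have hzlam3 : dg (lam*(lam*lam)) ∈ B := hdmul _ _ hzB (hdmul _ _ hzB hzB)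
  refine ⟨dg lam, dg_center hzB, ?_, ?_⟩
  · intro h
    apply hlam0
    have := congrArg (fun p => p.1.1) h
    simpa [dg] using this
  intro b hb
  obtain ⟨⟨b1, b2⟩, m1, m2⟩ := b
  set u₁ : (F × F) × (F × F) := ((μ₁,0),(0,0)) with hu₁def
  set u₂ : (F × F) × (F × F) := ((0,μ₂),(0,0)) with hu₂def
  set u₃ : (F × F) × (F × F) := ((0,0),(μ₃,0)) with hu₃def
  set u₄ : (F × F) × (F × F) := ((0,0),(0,μ₄)) with hu₄def
  set bb : (F × F) × (F × F) := ((b1,b2),(m1,m2)) with hbbdef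
  -- components extracted
  have hp₁ : (((b22Mul F ν bb u₁).1, 0) : (F × F) × (F × F)) ∈ B :=
    hgraded _ (hmulB _ hb _ hu₁)
  have hp₂ : (((b22Mul F ν bb u₂).1, 0) : (F × F) × (F × F)) ∈ B :=
    hgraded _ (hmulB _ hb _ hu₂)
  have ho₁ : b22Mul F ν bb u₂ + -(((b22Mul F ν bb u₂).1, 0) : (F × F) × (F × F)) ∈ B :=
    haddB _ (hmulB _ hb _ hu₂) _ (hnegB _ hp₂)
  have ho₂ : b22Mul F ν bb u₁ + -(((b22Mul F ν bb u₁).1, 0) : (F × F) × (F × F)) ∈ B :=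
    haddB _ (hmulB _ hb _ hu₁) _ (hnegB _ hp₁)
  have hd34 : dg (μ₃*μ₄) ∈ B := hdmul _ _ hdgB₃ hdgB₄
  -- the four diagonal elements
  have hd₁ : dg (μ₃*μ₄*(μ₁*b1)) ∈ B := by
    have h := haddB _ (hmulB _ hu₄ _ (hmulB _ hp₁ _ hu₃)) _
      (hmulB _ hd34 _ hp₁)
    rwa [show b22Mul F ν u₄ (b22Mul F ν (((b22Mul F ν bb u₁).1, 0)) u₃) +
        b22Mul F ν (dg (μ₃*μ₄)) (((b22Mul F ν bb u₁).1, 0)) =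
        dg (μ₃*μ₄*(μ₁*b1)) from by
      simp only [b22Mul_def, dg, hu₁def, hu₃def, hu₄def, hbbdef]
      refine Prod.ext (Prod.ext ?_ ?_) (Prod.ext ?_ ?_) <;>
        simp only [Prod.fst_zero, Prod.snd_zero, Prod.fst_add, Prod.snd_add,
          Prod.fst_neg, Prod.snd_neg, mul_zero, zero_mul, add_zero, zero_add,
          neg_zero, mul_one, one_mul] <;> ring] at h
  have hd₂ : dg (μ₃*μ₄*(μ₂*b2)) ∈ B := by
    have h := haddB _ (hmulB _ hu₃ _ (hmulB _ hp₂ _ hu₄)) _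
      (hmulB _ hd34 _ hp₂)
    rwa [show b22Mul F ν u₃ (b22Mul F ν (((b22Mul F ν bb u₂).1, 0)) u₄) +
        b22Mul F ν (dg (μ₃*μ₄)) (((b22Mul F ν bb u₂).1, 0)) =
        dg (μ₃*μ₄*(μ₂*b2)) from by
      simp only [b22Mul_def, dg, hu₂def, hu₃def, hu₄def, hbbdef]
      refine Prod.ext (Prod.ext ?_ ?_) (Prod.ext ?_ ?_) <;>
        simp only [Prod.fst_zero, Prod.snd_zero, Prod.fst_add, Prod.snd_add,
          Prod.fst_neg, Prod.snd_neg, mul_zero, zero_mul, add_zero, zero_add,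
          neg_zero, mul_one, one_mul] <;> ring] at h
  have hd₃ : dg (μ₄*(μ₂*m1)) ∈ B := by
    have h := haddB _
      (hmulB _ ho₁ _ hu₄) _ (hmulB _ hu₄ _ ho₁)
    rwa [show b22Mul F ν (b22Mul F ν bb u₂ + -(((b22Mul F ν bb u₂).1, 0))) u₄ +
        b22Mul F ν u₄ (b22Mul F ν bb u₂ + -(((b22Mul F ν bb u₂).1, 0))) =
        dg (μ₄*(μ₂*m1)) from by
      simp only [b22Mul_def, dg, hu₂def, hu₄def, hbbdef]
      refine Prod.ext (Prod.ext ?_ ?_) (Prod.ext ?_ ?_) <;>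
        simp only [Prod.fst_zero, Prod.snd_zero, Prod.fst_add, Prod.snd_add,
          Prod.fst_neg, Prod.snd_neg, mul_zero, zero_mul, add_zero, zero_add,
          neg_zero, mul_one, one_mul] <;> ring] at h
  have hd₄ : dg (μ₃*(μ₁*m2)) ∈ B := by
    have h := haddB _
      (hmulB _ hu₃ _ ho₂) _ (hmulB _ ho₂ _ hu₃)
    rwa [show b22Mul F ν u₃ (b22Mul F ν bb u₁ + -(((b22Mul F ν bb u₁).1, 0))) +
        b22Mul F ν (b22Mul F ν bb u₁ + -(((b22Mul F ν bb u₁).1, 0))) u₃ =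
        dg (μ₃*(μ₁*m2)) from by
      simp only [b22Mul_def, dg, hu₁def, hu₃def, hbbdef]
      refine Prod.ext (Prod.ext ?_ ?_) (Prod.ext ?_ ?_) <;>
        simp only [Prod.fst_zero, Prod.snd_zero, Prod.fst_add, Prod.snd_add,
          Prod.fst_neg, Prod.snd_neg, mul_zero, zero_mul, add_zero, zero_add,
          neg_zero, mul_one, one_mul] <;> ring] at h
  -- assemble the coefficients
  have hc₁ : dg (lam^4*b1) ∈ B :=
    hdcongr _ _ (by rw [hlam]; ring)
      (hdmul _ _ hzlam3 (hdmul _ _ hdgB₂ hd₁))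
  have hc₂ : dg (lam^4*b2) ∈ B :=
    hdcongr _ _ (by rw [hlam]; ring)
      (hdmul _ _ hzlam3 (hdmul _ _ hdgB₁ hd₂))
  have hc₃ : dg (lam^4*m1) ∈ B :=
    hdcongr _ _ (by rw [hlam]; ring)
      (hdmul _ _ hzlam3 (hdmul _ _ (hdmul _ _ hdgB₁ hdgB₃) hd₃))
  have hc₄ : dg (lam^4*m2) ∈ B :=
    hdcongr _ _ (by rw [hlam]; ring)
      (hdmul _ _ hzlam3 (hdmul _ _ (hdmul _ _ hdgB₂ hdgB₄) hd₄))
  refine ⟨dg (lam^4*b1), dg (lam^4*b2), dg (lam^4*m1), dg (lam^4*m2),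
    dg_center hc₁, dg_center hc₂, dg_center hc₃, dg_center hc₄, ?_⟩
  show (fun x => b22Mul F ν (dg lam) x)^[4] bb = _
  simp only [Function.iterate_succ, Function.iterate_zero, Function.comp_apply,
    id_eq, b22Mul_def, dg, hbbdef]
  refine Prod.ext (Prod.ext ?_ ?_) (Prod.ext ?_ ?_) <;> simp <;> ring
end
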